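/- Let N be a Nijenhuis operator on a pre-Lie algebra (g, ·). Then for all natural numbers k, l, the map N^l is a pre-Lie algebra homomorphism from (g, ·_{N^{k+l}}) to (g, ·_{N^k}). -/
import Mathlib

def PreLieFn {g : Type*} [AddCommGroup g] (m : g → g → g) : Prop :=
  ∀ x y z : g, m (m x y) z - m x (m y z) = m (m y x) z - m y (m x z)

def NijFn {g : Type*} [AddCommGroup g] (m : g → g → g) (N : g → g) : Prop :=
  ∀ x y : g, m (N x) (N y) = N (m (N x) y + m x (N y) - N (m x y))

def deform {g : Type*} [AddCommGroup g] (m : g → g → g) (N : g → g) : g → g → g :=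
  fun x y => m (N x) y + m x (N y) - N (m x y)

lemma pow_comm_apply {K g : Type*} [Field K] [AddCommGroup g] [Module K g]
    (N : Module.End K g) (k : ℕ) (z : g) : (N ^ k) (N z) = N ((N ^ k) z) := by
  have h : N ^ k * N = N * N ^ k := by rw [← pow_succ, pow_succ']
  calc (N ^ k) (N z) = (N ^ k * N) z := rfl
    _ = (N * N ^ k) z := by rw [h]
    _ = N ((N ^ k) z) := rfl

lemma compat_aux {K g : Type*} [Field K] [AddCommGroup g] [Module K g]
    (m : g →ₗ[K] g →ₗ[K] g) (N : Module.End K g)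
    (hN : NijFn (fun x y => m x y) N) (k : ℕ) (x y : g) :
    m (N x) ((N ^ k) y) + m ((N ^ k) x) (N y)
      = N (m ((N ^ k) x) y + m x ((N ^ k) y) - (N ^ k) (m x y))
        + (N ^ k) (m (N x) y + m x (N y) - N (m x y)) := by
  induction k generalizing x y with
  | zero => simp
  | succ k ih =>
    have h1 := hN x ((N ^ k) y)
    have h2 := hN ((N ^ k) x) y
    simp only at h1 h2
    have ih2 := congrArg (fun z => N z) (ih x y)
    simp only [map_add, map_sub, pow_comm_apply] at ih2
    rw [pow_succ']
    simp only [Module.End.mul_apply, map_add, map_sub, pow_comm_apply]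
    rw [h1, h2]
    simp only [map_add, map_sub]
    rw [← sub_eq_zero] at ih2 ⊢
    rw [← ih2]
    abel

lemma hom_one {K g : Type*} [Field K] [AddCommGroup g] [Module K g]
    (m : g →ₗ[K] g →ₗ[K] g) (N : Module.End K g)
    (hN : NijFn (fun x y => m x y) N) (k : ℕ) (x y : g) :
    N (m ((N ^ (k + 1)) x) y + m x ((N ^ (k + 1)) y) - (N ^ (k + 1)) (m x y))
      = m ((N ^ k) (N x)) (N y) + m (N x) ((N ^ k) (N y)) - (N ^ k) (m (N x) (N y)) := by
  have hc := compat_aux m N hN (k + 1) x y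
  have h3 := hN x y
  simp only at h3
  have h4 : (N ^ k) (m (N x) (N y))
      = (N ^ (k + 1)) (m (N x) y + m x (N y) - N (m x y)) := by
    rw [h3, pow_succ]
    simp only [Module.End.mul_apply]
  have h5 : (N ^ k) (N x) = (N ^ (k + 1)) x := by
    rw [pow_succ]; simp only [Module.End.mul_apply]
  have h6 : (N ^ k) (N y) = (N ^ (k + 1)) y := by
    rw [pow_succ]; simp only [Module.End.mul_apply]
  rw [h4, h5, h6, eq_sub_iff_add_eq, ← hc]
  abel

theorem power_deform_hom {K g : Type*} [Field K] [AddCommGroup g] [Module K g]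
    (m : g →ₗ[K] g →ₗ[K] g) (hm : PreLieFn (fun x y => m x y))
    (N : Module.End K g) (hN : NijFn (fun x y => m x y) N) :
    ∀ (k l : ℕ) (x y : g),
      (fun a : g => (N ^ l) a) (deform (fun x y => m x y) (fun a : g => (N ^ (k + l)) a) x y) =
      deform (fun x y => m x y) (fun a : g => (N ^ k) a) ((fun a : g => (N ^ l) a) x) ((fun a : g => (N ^ l) a) y) := by
  intro k l
  induction l generalizing k with
  | zero => intro x y; simp [deform]
  | succ l ih =>
    intro x y
    simp only [deform] at ih ⊢
    have key : (N ^ (l + 1)) (m ((N ^ (k + (l + 1))) x) y + m x ((N ^ (k + (l + 1))) y)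
        - (N ^ (k + (l + 1))) (m x y))
        = (N ^ l) (N (m ((N ^ ((k + 1) + l)) x) y + m x ((N ^ ((k + 1) + l)) y)
          - (N ^ ((k + 1) + l)) (m x y))) := by
      have h : k + (l + 1) = (k + 1) + l := by ring
      rw [h, pow_succ']
      simp only [Module.End.mul_apply]
      exact (pow_comm_apply N l _).symm
    rw [key]
    have step : N (m ((N ^ ((k + 1) + l)) x) y + m x ((N ^ ((k + 1) + l)) y)
        - (N ^ ((k + 1) + l)) (m x y))
        = m ((N ^ (k + l)) (N x)) (N y) + m (N x) ((N ^ (k + l)) (N y))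
          - (N ^ (k + l)) (m (N x) (N y)) := by
      have h : (k + 1) + l = (k + l) + 1 := by ring
      rw [h]
      exact hom_one m N hN (k + l) x y
    rw [step, ih k (N x) (N y)]
    simp only [pow_succ, Module.End.mul_apply]
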